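/- If the automorphism group of a transitive avoidance game contains a fixed-point-free involution of the board, then the game is not a Player I win. -/

import Mathlib

/-- A strategy: given the history of moves so far (in chronological order),
choose the next point to claim. -/
abbrev Strategy (X : Type*) := List X → X

/-- A strategy is valid if, whenever the history has no repeats and the board is
not yet full, it picks a previously unclaimed point. -/
def ValidStrategy {X : Type*} [Fintype X] (s : Strategy X) : Prop :=
  ∀ h : List X, h.Nodup → h.length < Fintype.card X → s h ∉ h

/-- The play (history of moves) after `k` moves, when Player I uses `sI`
(moving at even times) and Player II uses `sII` (moving at odd times). -/
def play {X : Type*} (sI sII : Strategy X) : ℕ → List X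
  | 0 => []
  | k + 1 =>
      let h := play sI sII k
      h ++ [if k % 2 = 0 then sI h else sII h]

/-- The set of points claimed by Player I in a history: the moves at even positions. -/
def claimedI {X : Type*} (h : List X) : Set X :=
  { x | ∃ i : ℕ, i % 2 = 0 ∧ h[i]? = some x }

/-- The set of points claimed by Player II in a history: the moves at odd positions. -/
def claimedII {X : Type*} (h : List X) : Set X :=
  { x | ∃ i : ℕ, i % 2 = 1 ∧ h[i]? = some x }

/-- A set of points contains a line of `ℒ`. -/
def ContainsLine {X : Type*} (ℒ : Set (Finset X)) (S : Set X) : Prop :=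
  ∃ L ∈ ℒ, ↑L ⊆ S

/-- The avoidance game with lines `ℒ` is a Player I win: Player I has a valid strategy
such that against every valid strategy of Player II there is a moment at which
Player II's claimed set contains a line while Player I's claimed set does not
(by monotonicity of the claimed sets, this says exactly that Player II's set comes
to contain a line strictly before Player I's set does). -/
def PIWin {X : Type*} [Fintype X] (ℒ : Set (Finset X)) : Prop :=
  ∃ sI : Strategy X, ValidStrategy sI ∧
    ∀ sII : Strategy X, ValidStrategy sII →
      ∃ k ≤ Fintype.card X,
        ContainsLine ℒ (claimedII (play sI sII k)) ∧
        ¬ ContainsLine ℒ (claimedI (play sI sII k))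

/-- A permutation of the board is an automorphism of the game if it maps the
family of lines onto itself. -/
def IsGameAuto {X : Type*} [DecidableEq X] (ℒ : Set (Finset X)) (g : Equiv.Perm X) : Prop :=
  ∀ L : Finset X, L ∈ ℒ ↔ L.image g ∈ ℒ

/-- The game is transitive if its automorphism group acts transitively on the board. -/
def TransitiveGame {X : Type*} [DecidableEq X] (ℒ : Set (Finset X)) : Prop :=
  ∀ x y : X, ∃ g : Equiv.Perm X, IsGameAuto ℒ g ∧ g x = y

section Aux

variable {X : Type*} [Fintype X] [DecidableEq X]

lemma exists_not_mem_of_short {h : List X} (hlen : h.length < Fintype.card X) :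
    ∃ x : X, x ∉ h := by
  by_contra hc
  push_neg at hc
  have hsub : (Finset.univ : Finset X) ⊆ h.toFinset := fun x _ => List.mem_toFinset.2 (hc x)
  have h1 := Finset.card_le_card hsub
  have h2 := h.toFinset_card_le
  simp only [Finset.card_univ] at h1
  omega

noncomputable def mirrorStrat [Inhabited X] (g : Equiv.Perm X) : Strategy X :=
  fun h =>
    if g (h.getLast?.getD default) ∉ h then g (h.getLast?.getD default)
    else if hf : ∃ x : X, x ∉ h then hf.choose else default

lemma mirrorStrat_valid [Inhabited X] (g : Equiv.Perm X) :
    ValidStrategy (mirrorStrat g) := by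
  intro h _ hlen
  unfold mirrorStrat
  by_cases h1 : g (h.getLast?.getD default) ∉ h
  · rw [if_pos h1]; exact h1
  · rw [if_neg h1]
    have hf : ∃ x : X, x ∉ h := exists_not_mem_of_short hlen
    rw [dif_pos hf]; exact hf.choose_spec

lemma play_length (sI sII : Strategy X) : ∀ k, (play sI sII k).length = k
  | 0 => rfl
  | k + 1 => by
      rw [play]
      simp [play_length sI sII k]

lemma play_nodup (sI sII : Strategy X) (hsI : ValidStrategy sI) (hsII : ValidStrategy sII) :
    ∀ k, k ≤ Fintype.card X → (play sI sII k).Nodup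
  | 0, _ => List.nodup_nil
  | k + 1, hk => by
      have hn := play_nodup sI sII hsI hsII k (by omega)
      have hlen : (play sI sII k).length < Fintype.card X := by
        rw [play_length]; omega
      have hm : (if k % 2 = 0 then sI (play sI sII k) else sII (play sI sII k))
          ∉ play sI sII k := by
        split_ifs
        · exact hsI _ hn hlen
        · exact hsII _ hn hlen
      rw [play]
      simp [List.nodup_append, hn, hm]
      intro a ha hEq; exact hm (hEq ▸ ha)

lemma nodup_get?_inj {h : List X} (hnd : h.Nodup) {i j : ℕ} {x : X}
    (hi : h[i]? = some x) (hj : h[j]? = some x) : i = j := by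
  rw [List.getElem?_eq_some_iff] at hi hj
  obtain ⟨hi1, hi2⟩ := hi
  obtain ⟨hj1, hj2⟩ := hj
  have := (List.nodup_iff_injective_get.1 hnd)
      (show h.get ⟨i, hi1⟩ = h.get ⟨j, hj1⟩ by simp [hi2, hj2])
  simpa using this

lemma mirror_play [Inhabited X] (g : Equiv.Perm X) (hinv : ∀ x : X, g (g x) = x)
    (hfpf : ∀ x : X, g x ≠ x) (sI : Strategy X) (hsI : ValidStrategy sI) :
    ∀ k, k ≤ Fintype.card X → ∀ j, 2 * j + 1 < k →
      (play sI (mirrorStrat g) k)[2 * j + 1]?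
        = Option.map g ((play sI (mirrorStrat g) k)[2 * j]?)
  | 0, _, j, hj => by omega
  | k + 1, hk, j, hj => by
      set h := play sI (mirrorStrat g) k with hh
      have hlen : h.length = k := play_length _ _ k
      have hnd : h.Nodup := play_nodup _ _ hsI (mirrorStrat_valid g) k (by omega)
      have hpre : ∀ i < k, (play sI (mirrorStrat g) (k + 1))[i]? = h[i]? := by
        intro i hi
        rw [play]
        exact List.getElem?_append_left (by rw [hlen]; exact hi)
      rcases Nat.lt_or_ge (2 * j + 1) k with hlt | hge
      · rw [hpre _ hlt, hpre _ (by omega)]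
        exact mirror_play g hinv hfpf sI hsI k (by omega) j hlt
      · have hk2 : 2 * j + 1 = k := by omega
        have hkodd : k % 2 = 1 := by omega
        obtain ⟨x, hx⟩ : ∃ x, h[2 * j]? = some x := by
          have h2j : 2 * j < h.length := by omega
          exact ⟨h[2 * j], List.getElem?_eq_some_iff.2 ⟨h2j, rfl⟩⟩
        have hgx : g x ∉ h := by
          intro hmem
          obtain ⟨i, hi⟩ := List.mem_iff_getElem?.1 hmem
          have hik : i < k := by
            obtain ⟨hh1, -⟩ := List.getElem?_eq_some_iff.1 hi
            omega
          rcases Nat.even_or_odd i with ⟨m, hm⟩ | ⟨m, hm⟩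
          · by_cases hieq : i = 2 * j
            · rw [hieq, hx] at hi
              exact hfpf x (Option.some.inj hi).symm
            · have hi1 : 2 * m + 1 < k := by omega
              have hmm := mirror_play g hinv hfpf sI hsI k (by omega) m hi1
              rw [show 2 * m = i by omega, hi] at hmm
              simp only [Option.map_some, hinv x] at hmm
              have := nodup_get?_inj hnd hmm hx
              omega
          · have hmm := mirror_play g hinv hfpf sI hsI k (by omega) m (by omega)
            rw [show 2 * m + 1 = i by omega, hi] at hmm
            obtain ⟨y, hy1, hy2⟩ := Option.map_eq_some_iff.1 hmm.symm
            have hyx : y = x := g.injective hy2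
            rw [hyx] at hy1
            have := nodup_get?_inj hnd hy1 hx
            omega
        have hlast : h.getLast?.getD default = x := by
          rw [List.getLast?_eq_getElem?, hlen, show k - 1 = 2 * j by omega, hx]
          rfl
        have hms : mirrorStrat g h = g x := by
          unfold mirrorStrat
          rw [hlast, if_pos hgx]
        have hnew : play sI (mirrorStrat g) (k + 1) = h ++ [mirrorStrat g h] := by
          rw [play]
          simp [hkodd, ← hh]
        rw [hnew, show 2 * j + 1 = h.length by omega, List.getElem?_concat_length,
          List.getElem?_append_left (show 2 * j < h.length by omega), hx, hms]
        rfl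

end Aux

/-- If the automorphism group of a transitive avoidance game contains a
fixed-point-free involution of the board, then the game is not a Player I win. -/
theorem statement6 {X : Type*} [Fintype X] [DecidableEq X] (ℒ : Set (Finset X))
    (htrans : TransitiveGame ℒ) (g : Equiv.Perm X) (hauto : IsGameAuto ℒ g)
    (hinv : ∀ x : X, g (g x) = x) (hfpf : ∀ x : X, g x ≠ x) :
    ¬ PIWin ℒ := by
  classical
  rintro ⟨sI, hsI, hwin⟩
  haveI : Inhabited X := ⟨sI []⟩
  obtain ⟨k, hk, ⟨L, hL, hsub⟩, hI⟩ := hwin (mirrorStrat g) (mirrorStrat_valid g)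
  apply hI
  refine ⟨L.image g, (hauto L).1 hL, ?_⟩
  intro y hy
  simp only [Finset.coe_image, Set.mem_image, Finset.mem_coe] at hy
  obtain ⟨z, hz, rfl⟩ := hy
  obtain ⟨i, hi1, hi2⟩ := hsub hz
  have him : i = 2 * (i / 2) + 1 := by omega
  have hilt : 2 * (i / 2) + 1 < k := by
    obtain ⟨h1, -⟩ := List.getElem?_eq_some_iff.1 hi2
    have h2 := play_length sI (mirrorStrat g) k
    omega
  have hm := mirror_play g hinv hfpf sI hsI k hk (i / 2) hilt
  rw [him] at hi2
  rw [hi2] at hm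
  obtain ⟨w, hw1, hw2⟩ := Option.map_eq_some_iff.1 hm.symm
  have hwz : w = g z := g.injective (by rw [hw2, hinv])
  exact ⟨2 * (i / 2), by omega, by rw [hw1, hwz]⟩
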